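/- In the setting above, suppose ind(A_min) ≤ 0, ind(A_max) ≥ 0, and both d'' := −ind(A_min) > 0 and d' := ind(A_max) > 0 (i.e. the Grassmannian of index-zero domains has positive dimension). Then for every λ ∈ ℂ there exists an intermediate domain D with dim(D/D_min) = d'' (so ind(A_D) = 0) such that λ belongs to the spectrum of A_D, i.e. A_D − λ is not bijective. -/
import Mathlib

open Module Submodule LinearMap

/-- The index (dim ker − dim coker) of the restriction of `A` to `D`. -/
noncomputable def opInd {H V : Type*} [AddCommGroup H] [Module ℂ H]
    [AddCommGroup V] [Module ℂ V] (A : V →ₗ[ℂ] H) (D : Submodule ℂ V) : ℤ :=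
  (Module.finrank ℂ (LinearMap.ker (A.domRestrict D)) : ℤ)
    - (Module.finrank ℂ (H ⧸ LinearMap.range (A.domRestrict D)) : ℤ)

/-- The dimension of `D / Dmin`. -/
noncomputable def relDim {V : Type*} [AddCommGroup V] [Module ℂ V]
    (Dmin D : Submodule ℂ V) : ℕ :=
  Module.finrank ℂ (↥D ⧸ Submodule.comap D.subtype Dmin)

/-- `relDim Dmin D` is the dimension of the image of `D` in `V ⧸ Dmin`. -/
lemma relDim_eq_finrank_map {V : Type*} [AddCommGroup V] [Module ℂ V]
    (Dmin D : Submodule ℂ V) :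
    relDim Dmin D = Module.finrank ℂ (Submodule.map Dmin.mkQ D) := by
  have hker : LinearMap.ker (Dmin.mkQ ∘ₗ D.subtype) = Submodule.comap D.subtype Dmin := by
    rw [LinearMap.ker_comp, Submodule.ker_mkQ]
  have hrange : LinearMap.range (Dmin.mkQ ∘ₗ D.subtype) = Submodule.map Dmin.mkQ D := by
    rw [LinearMap.range_comp, Submodule.range_subtype]
  have e := (Submodule.quotEquivOfEq _ _ hker.symm).trans
    ((Dmin.mkQ ∘ₗ D.subtype).quotKerEquivRange)
  rw [relDim, e.finrank_eq, hrange]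

/-- Extension of a submodule to one of any larger dimension below the ambient dimension. -/
lemma exists_inter_finrank {Q : Type*} [AddCommGroup Q] [Module ℂ Q] [FiniteDimensional ℂ Q]
    (k : ℕ) (hk : k ≤ Module.finrank ℂ Q) :
    ∀ W0 : Submodule ℂ Q, Module.finrank ℂ W0 ≤ k → ∃ W, W0 ≤ W ∧ Module.finrank ℂ W = k := by
  have H : ∀ n : ℕ, ∀ W0 : Submodule ℂ Q, Module.finrank ℂ W0 ≤ k →
      k - Module.finrank ℂ W0 = n → ∃ W, W0 ≤ W ∧ Module.finrank ℂ W = k := by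
    intro n
    induction n with
    | zero =>
      intro W0 h1 h2
      exact ⟨W0, le_rfl, le_antisymm h1 (by omega)⟩
    | succ n ih =>
      intro W0 h1 h2
      have hlt : Module.finrank ℂ W0 < Module.finrank ℂ Q := by omega
      obtain ⟨v, hv⟩ := Submodule.exists_of_finrank_lt W0 hlt
      have hv1 : v ∉ W0 := by simpa using hv 1 one_ne_zero
      have hv0 : v ≠ 0 := fun h => hv1 (h ▸ W0.zero_mem)
      have hdisj : W0 ⊓ (ℂ ∙ v) = ⊥ :=
        ((Submodule.disjoint_span_singleton' hv0).mpr hv1).eq_bot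
      have hrk : Module.finrank ℂ ↥(W0 ⊔ (ℂ ∙ v)) = Module.finrank ℂ W0 + 1 := by
        have := Submodule.finrank_sup_add_finrank_inf_eq W0 (ℂ ∙ v)
        rw [hdisj, finrank_bot, finrank_span_singleton hv0] at this
        omega
      have h1' : Module.finrank ℂ ↥(W0 ⊔ (ℂ ∙ v)) ≤ k := by omega
      obtain ⟨W, hW1, hW2⟩ := ih (W0 ⊔ (ℂ ∙ v)) h1' (by omega)
      exact ⟨W, le_trans le_sup_left hW1, hW2⟩
  intro W0 h1
  exact H (k - Module.finrank ℂ W0) W0 h1 rfl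

lemma opInd_eq_zero_of_bijective {H V : Type*} [AddCommGroup H] [Module ℂ H]
    [AddCommGroup V] [Module ℂ V] (A : V →ₗ[ℂ] H) (D : Submodule ℂ V)
    (h : Function.Bijective (A.domRestrict D)) : opInd A D = 0 := by
  have hker : LinearMap.ker (A.domRestrict D) = ⊥ := LinearMap.ker_eq_bot.mpr h.injective
  have hrange : LinearMap.range (A.domRestrict D) = ⊤ := LinearMap.range_eq_top.mpr h.surjective
  rw [opInd, hker, hrange, finrank_bot]
  haveI : Subsingleton (H ⧸ (⊤ : Submodule ℂ H)) :=
    Submodule.Quotient.subsingleton_iff.mpr rfl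
  rw [finrank_zero_of_subsingleton]
  simp

/-- If `d'' = −ind A_min > 0` and `d' = ind A_max > 0`, then for every `λ ∈ ℂ` there is an
intermediate domain `D` with `dim D/D_min = d''` (so `ind A_D = 0`) such that `λ ∈ spec A_D`. -/
theorem stmt_2 {H : Type*} [NormedAddCommGroup H] [InnerProductSpace ℂ H] [CompleteSpace H]
    (Dmax : Submodule ℂ H) (A : ↥Dmax →ₗ[ℂ] H) (Dmin : Submodule ℂ ↥Dmax)
    (hcodim : FiniteDimensional ℂ (↥Dmax ⧸ Dmin))
    (hker : ∀ (μ : ℂ) (D : Submodule ℂ ↥Dmax), Dmin ≤ D →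
      FiniteDimensional ℂ (LinearMap.ker ((A - μ • Dmax.subtype).domRestrict D)))
    (hclosed : ∀ (μ : ℂ) (D : Submodule ℂ ↥Dmax), Dmin ≤ D →
      IsClosed ((LinearMap.range ((A - μ • Dmax.subtype).domRestrict D) : Submodule ℂ H) : Set H))
    (hcoker : ∀ (μ : ℂ) (D : Submodule ℂ ↥Dmax), Dmin ≤ D →
      FiniteDimensional ℂ (H ⧸ LinearMap.range ((A - μ • Dmax.subtype).domRestrict D)))
    (hrel : ∀ (μ : ℂ) (D : Submodule ℂ ↥Dmax), Dmin ≤ D →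
      opInd (A - μ • Dmax.subtype) D = opInd (A - μ • Dmax.subtype) Dmin + relDim Dmin D)
    -- d'' = −ind A_min > 0 and d' = ind A_max > 0
    (hmin : opInd A Dmin < 0) (hmax : 0 < opInd A (⊤ : Submodule ℂ ↥Dmax)) :
    ∀ lam : ℂ, ∃ D : Submodule ℂ ↥Dmax, Dmin ≤ D ∧
      (relDim Dmin D : ℤ) = -opInd A Dmin ∧
      ¬ Function.Bijective ((A - lam • Dmax.subtype).domRestrict D) := by
  intro lam
  set B := A - lam • Dmax.subtype with hB
  have hA0 : A - (0 : ℂ) • Dmax.subtype = A := by rw [zero_smul, sub_zero]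
  -- total relative dimension
  have htot : (relDim Dmin (⊤ : Submodule ℂ ↥Dmax) : ℤ)
      = opInd A (⊤ : Submodule ℂ ↥Dmax) - opInd A Dmin := by
    have := hrel 0 ⊤ le_top
    rw [hA0] at this
    omega
  -- relDim Dmin ⊤ = finrank of quotient
  have htop : relDim Dmin (⊤ : Submodule ℂ ↥Dmax) = Module.finrank ℂ (↥Dmax ⧸ Dmin) := by
    rw [relDim_eq_finrank_map, Submodule.map_top, Submodule.range_mkQ, finrank_top]
  set k : ℕ := (-opInd A Dmin).toNat with hkdef
  have hkZ : (k : ℤ) = -opInd A Dmin := Int.toNat_of_nonneg (by omega)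
  have hkle : k ≤ Module.finrank ℂ (↥Dmax ⧸ Dmin) := by
    rw [← htop]; omega
  have hkpos : 0 < k := by omega
  -- Facts about D = comap mkQ W
  have hDfacts : ∀ W : Submodule ℂ (↥Dmax ⧸ Dmin), Module.finrank ℂ W = k →
      Dmin ≤ Submodule.comap Dmin.mkQ W ∧
      (relDim Dmin (Submodule.comap Dmin.mkQ W) : ℤ) = -opInd A Dmin := by
    intro W hW
    have hle : Dmin ≤ Submodule.comap Dmin.mkQ W := by
      intro x hx
      have : Dmin.mkQ x = 0 := (Submodule.Quotient.mk_eq_zero _).mpr hx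
      simp [Submodule.mem_comap, this]
    have hmapW : Submodule.map Dmin.mkQ (Submodule.comap Dmin.mkQ W) = W :=
      Submodule.map_comap_eq_of_surjective Dmin.mkQ_surjective W
    refine ⟨hle, ?_⟩
    rw [relDim_eq_finrank_map, hmapW, hW, hkZ]
  by_cases hK : ∃ v : ↥Dmax, v ≠ 0 ∧ B v = 0
  · -- there is an eigenvector in Dmax: put it inside D
    obtain ⟨v, hv0, hvB⟩ := hK
    have hspan : Module.finrank ℂ (ℂ ∙ (Dmin.mkQ v)) ≤ k := by
      by_cases h : Dmin.mkQ v = 0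
      · rw [h, Submodule.span_zero_singleton, finrank_bot]; omega
      · rw [finrank_span_singleton h]; omega
    obtain ⟨W, hW0, hWk⟩ := exists_inter_finrank k hkle (ℂ ∙ (Dmin.mkQ v)) hspan
    obtain ⟨hle, hdim⟩ := hDfacts W hWk
    refine ⟨Submodule.comap Dmin.mkQ W, hle, hdim, ?_⟩
    intro hbij
    have hvD : v ∈ Submodule.comap Dmin.mkQ W :=
      hW0 (Submodule.mem_span_singleton_self _)
    have hx0 : (B.domRestrict (Submodule.comap Dmin.mkQ W)) ⟨v, hvD⟩ = 0 := by
      rw [LinearMap.domRestrict_apply]; exact hvB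
    have h00 : (B.domRestrict (Submodule.comap Dmin.mkQ W)) 0 = 0 := map_zero _
    have := hbij.injective (a₁ := ⟨v, hvD⟩) (a₂ := 0) (hx0.trans h00.symm)
    exact hv0 (congrArg Subtype.val this)
  · -- B is injective on Dmax
    push_neg at hK
    have hinj : ∀ v : ↥Dmax, B v = 0 → v = 0 := by
      intro v hv
      by_contra h
      exact (hK v h) hv
    obtain ⟨W, _, hWk⟩ := exists_inter_finrank k hkle ⊥ (by rw [finrank_bot]; omega)
    obtain ⟨hle, hdim⟩ := hDfacts W hWk
    refine ⟨Submodule.comap Dmin.mkQ W, hle, hdim, ?_⟩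
    intro hbij
    -- opInd B D = 0
    have h0 : opInd B (Submodule.comap Dmin.mkQ W) = 0 :=
      opInd_eq_zero_of_bijective B _ hbij
    -- opInd B ⊤ ≤ 0 since ker B_⊤ = ⊥
    have hkertop : LinearMap.ker (B.domRestrict (⊤ : Submodule ℂ ↥Dmax)) = ⊥ := by
      rw [LinearMap.ker_eq_bot']
      intro x hx
      have : (x : ↥Dmax) = 0 := hinj x (by simpa using hx)
      exact Subtype.ext this
    have htople : opInd B (⊤ : Submodule ℂ ↥Dmax) ≤ 0 := by
      rw [opInd, hkertop, finrank_bot]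
      omega
    -- from hrel with μ = lam
    have h1 := hrel lam (Submodule.comap Dmin.mkQ W) hle
    have h2 := hrel lam ⊤ le_top
    rw [← hB] at h1 h2
    rw [h0] at h1
    -- h1 : 0 = opInd B Dmin + relDim Dmin D; relDim D = k
    have hrdD : (relDim Dmin (Submodule.comap Dmin.mkQ W) : ℤ) = k := by omega
    omega
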